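/- Let K be a field, let e_1, e_2, …, e_m be a basis of the m-dimensional vector space K^m, and let T_1, T_2, …, T_k be linear transformations from K^m to K^n. Suppose that for every l and every l-tuple {e_{i_1}, …, e_{i_l}} of distinct basis vectors, the K-linear span of the vectors {T_j(e_{i_t}) : 1 ≤ t ≤ l, 1 ≤ j ≤ k} has dimension at least 2l. Then there exist two functions φ, ψ : {1, 2, …, m} → {1, 2, …, k} such that the 2m vectors T_{φ(1)}(e_1), …, T_{φ(m)}(e_m), T_{ψ(1)}(e_1), …, T_{ψ(m)}(e_m) are linearly independent. -/
import Mathlib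


open Module Submodule

/-- Rado's theorem for vector matroids: if every finite subfamily of a finite family of
finite sets of vectors spans a subspace of dimension at least the number of sets, then
one can pick one vector from each set so that the chosen vectors are linearly independent. -/
theorem rado_aux {K : Type*} [Field K] {V : Type*} [AddCommGroup V] [Module K V]
    [FiniteDimensional K V] {ι : Type*} [Fintype ι] [DecidableEq ι] [DecidableEq V] :
    ∀ (N : ℕ) (A : ι → Finset V), (∑ i, (A i).card = N) →
    (∀ s : Finset ι, s.card ≤ finrank K (span K ((s.biUnion A : Finset V) : Set V))) →
    ∃ f : ι → V, (∀ i, f i ∈ A i) ∧ LinearIndependent K f := by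
  intro N
  induction N using Nat.strong_induction_on with
  | _ N IH =>
    intro A hN hA
    by_cases hbig : ∃ i0, 2 ≤ (A i0).card
    · obtain ⟨i0, hi0⟩ := hbig
      obtain ⟨x, hx, y, hy, hxy⟩ := Finset.one_lt_card.mp hi0
      -- try removing x or y from A i0
      have key : ∀ (z : V), z ∈ A i0 →
          (∀ s : Finset ι,
            s.card ≤ finrank K (span K ((s.biUnion (Function.update A i0 (A i0 \ {z})) : Finset V) : Set V))) →
          ∃ f : ι → V, (∀ i, f i ∈ A i) ∧ LinearIndependent K f := by
        intro z hz hcond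
        set A' := Function.update A i0 (A i0 \ {z}) with hA'
        have hsub : ∀ i, A' i ⊆ A i := by
          intro i
          by_cases h : i = i0
          · subst h; simp only [hA', Function.update_self]
            exact Finset.sdiff_subset
          · simp [hA', Function.update_of_ne h]
        have hlt : ∑ i, (A' i).card < N := by
          rw [← hN]
          apply Finset.sum_lt_sum
          · intro i _; exact Finset.card_le_card (hsub i)
          · refine ⟨i0, Finset.mem_univ _, ?_⟩
            have : A' i0 = A i0 \ {z} := Function.update_self _ _ _
            rw [this]
            have : (A i0 \ {z}).card < (A i0).card :=
              Finset.card_lt_card (Finset.sdiff_ssubset (by simpa using hz) (by simp))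
            exact this
        obtain ⟨f, hf, hind⟩ := IH _ hlt A' rfl hcond
        exact ⟨f, fun i => hsub i (hf i), hind⟩
      by_cases h1 : ∀ s : Finset ι,
          s.card ≤ finrank K (span K ((s.biUnion (Function.update A i0 (A i0 \ {x})) : Finset V) : Set V))
      · exact key x hx h1
      by_cases h2 : ∀ s : Finset ι,
          s.card ≤ finrank K (span K ((s.biUnion (Function.update A i0 (A i0 \ {y})) : Finset V) : Set V))
      · exact key y hy h2
      -- contradiction via submodularity
      exfalso
      push_neg at h1 h2
      obtain ⟨s, hs⟩ := h1
      obtain ⟨t, ht⟩ := h2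
      set A₁ := Function.update A i0 (A i0 \ {x}) with hA₁
      set A₂ := Function.update A i0 (A i0 \ {y}) with hA₂
      have hi0s : i0 ∈ s := by
        by_contra h
        have heq : s.biUnion A₁ = s.biUnion A := by
          apply Finset.biUnion_congr rfl
          intro i hi
          exact Function.update_of_ne (by rintro rfl; exact h hi) _ _
        rw [heq] at hs
        exact absurd (hA s) (not_le.mpr hs)
      have hi0t : i0 ∈ t := by
        by_contra h
        have heq : t.biUnion A₂ = t.biUnion A := by
          apply Finset.biUnion_congr rfl
          intro i hi
          exact Function.update_of_ne (by rintro rfl; exact h hi) _ _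
        rw [heq] at ht
        exact absurd (hA t) (not_le.mpr ht)
      set P := span K ((s.biUnion A₁ : Finset V) : Set V) with hP
      set Q := span K ((t.biUnion A₂ : Finset V) : Set V) with hQ
      -- sup bound
      have hsup : span K (((s ∪ t).biUnion A : Finset V) : Set V) ≤ P ⊔ Q := by
        rw [hP, hQ, ← span_union]
        apply span_mono
        rw [← Finset.coe_union]
        intro v hv
        simp only [Finset.coe_union, Set.mem_union, Finset.mem_coe, Finset.mem_biUnion] at hv ⊢
        obtain ⟨i, hi, hvi⟩ := hv
        simp only [Finset.mem_union] at hi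
        by_cases hii : i = i0
        · subst hii
          by_cases hvx : v = x
          · right
            refine ⟨i, hi0t, ?_⟩
            rw [hA₂, Function.update_self, Finset.mem_sdiff]
            exact ⟨hvi, by simp [hvx, hxy]⟩
          · left
            refine ⟨i, hi0s, ?_⟩
            rw [hA₁, Function.update_self, Finset.mem_sdiff]
            exact ⟨hvi, by simp [hvx]⟩
        · rcases hi with hi | hi
          · exact Or.inl ⟨i, hi, by rw [hA₁, Function.update_of_ne hii]; exact hvi⟩
          · exact Or.inr ⟨i, hi, by rw [hA₂, Function.update_of_ne hii]; exact hvi⟩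
      -- inf bound
      have hinf : span K ((((s ∩ t).erase i0).biUnion A : Finset V) : Set V) ≤ P ⊓ Q := by
        apply le_inf
        · apply span_mono
          intro v hv
          simp only [Finset.mem_coe, Finset.mem_biUnion] at hv ⊢
          obtain ⟨i, hi, hvi⟩ := hv
          have hii : i ≠ i0 := Finset.ne_of_mem_erase hi
          have his : i ∈ s := (Finset.mem_inter.mp (Finset.mem_of_mem_erase hi)).1
          exact ⟨i, his, by rw [hA₁, Function.update_of_ne hii]; exact hvi⟩
        · apply span_mono
          intro v hv
          simp only [Finset.mem_coe, Finset.mem_biUnion] at hv ⊢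
          obtain ⟨i, hi, hvi⟩ := hv
          have hii : i ≠ i0 := Finset.ne_of_mem_erase hi
          have hit : i ∈ t := (Finset.mem_inter.mp (Finset.mem_of_mem_erase hi)).2
          exact ⟨i, hit, by rw [hA₂, Function.update_of_ne hii]; exact hvi⟩
      have hrk := Submodule.finrank_sup_add_finrank_inf_eq P Q
      have h3 : (s ∪ t).card ≤ finrank K ↥(P ⊔ Q) :=
        le_trans (hA (s ∪ t)) (Submodule.finrank_mono hsup)
      have h4 : ((s ∩ t).erase i0).card ≤ finrank K ↥(P ⊓ Q) :=
        le_trans (hA _) (Submodule.finrank_mono hinf)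
      have h5 : ((s ∩ t).erase i0).card = (s ∩ t).card - 1 :=
        Finset.card_erase_of_mem (Finset.mem_inter.mpr ⟨hi0s, hi0t⟩)
      have h6 : (s ∪ t).card + (s ∩ t).card = s.card + t.card :=
        Finset.card_union_add_card_inter s t
      have h7 : 1 ≤ (s ∩ t).card :=
        Finset.card_pos.mpr ⟨i0, Finset.mem_inter.mpr ⟨hi0s, hi0t⟩⟩
      omega
    · -- every set has at most one element
      push_neg at hbig
      have hone : ∀ i, ∃ v, A i = {v} := by
        intro i
        rcases Finset.card_le_one_iff_subset_singleton.mp (by have := hbig i; omega : (A i).card ≤ 1) with ⟨v, hv⟩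
        rcases Finset.subset_singleton_iff.mp hv with h | h
        · exfalso
          have := hA {i}
          rw [Finset.singleton_biUnion, h] at this
          simp at this
        · exact ⟨v, h⟩
      choose f hf using hone
      have hmem : ∀ i, f i ∈ A i := fun i => by rw [hf i]; exact Finset.mem_singleton_self _
      refine ⟨f, hmem, ?_⟩
      have hbu : (Finset.univ.biUnion A : Finset V) = Finset.univ.image f := by
        ext v
        simp [hf, eq_comm]
      have hcard := hA Finset.univ
      rw [hbu] at hcard
      have hrange : ((Finset.univ.image f : Finset V) : Set V) = Set.range f := by
        rw [Finset.coe_image, Finset.coe_univ, Set.image_univ]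
      rw [hrange] at hcard
      simp only [Finset.card_univ] at hcard
      have hle : (Set.range f).finrank K ≤ Fintype.card ι := by
        have := finrank_span_finset_le_card (R := K) (Finset.univ.image f)
        rw [hrange] at this
        exact le_trans this (le_trans Finset.card_image_le (le_of_eq (Finset.card_univ)))
      exact linearIndependent_iff_card_eq_finrank_span.mpr (le_antisymm hcard hle)

/-- Doubling Hall lemma: if every `l`-tuple of distinct basis vectors of `K^m` has the span of
all its images under `T₁, …, T_k` at least `2l`-dimensional, then there are
`φ, ψ : {1,…,m} → {1,…,k}` such that the `2m` vectors
`T_{φ(i)}(e_i), T_{ψ(i)}(e_i)` are linearly independent. -/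
theorem linear_hall_lemma_doubling {K : Type*} [Field K] {m n k : ℕ}
    (e : Basis (Fin m) K (Fin m → K))
    (T : Fin k → ((Fin m → K) →ₗ[K] (Fin n → K)))
    (hT : ∀ s : Finset (Fin m),
      2 * s.card ≤ finrank K (Submodule.span K {v : Fin n → K | ∃ i ∈ s, ∃ j, v = T j (e i)})) :
    ∃ φ ψ : Fin m → Fin k,
      LinearIndependent K
        (Sum.elim (fun i => T (φ i) (e i)) (fun i : Fin m => T (ψ i) (e i))) := by
  classical
  set A : Fin m ⊕ Fin m → Finset (Fin n → K) :=
    fun x => Finset.univ.image (fun j => T j (e (Sum.elim id id x))) with hA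
  have hcond : ∀ s : Finset (Fin m ⊕ Fin m),
      s.card ≤ finrank K (span K ((s.biUnion A : Finset (Fin n → K)) : Set (Fin n → K))) := by
    intro s
    set t := s.image (Sum.elim id id) with hts
    have hcard : s.card ≤ 2 * t.card := by
      have hsub : s ⊆ t.biUnion (fun i => {Sum.inl i, Sum.inr i}) := by
        intro x hx
        simp only [Finset.mem_biUnion, Finset.mem_insert, Finset.mem_singleton]
        refine ⟨Sum.elim id id x, Finset.mem_image_of_mem _ hx, ?_⟩
        cases x <;> simp
      calc s.card ≤ (t.biUnion fun i => ({Sum.inl i, Sum.inr i} : Finset (Fin m ⊕ Fin m))).card :=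
            Finset.card_le_card hsub
        _ ≤ ∑ i ∈ t, ({Sum.inl i, Sum.inr i} : Finset (Fin m ⊕ Fin m)).card :=
            Finset.card_biUnion_le
        _ ≤ ∑ _i ∈ t, 2 := Finset.sum_le_sum (fun i _ =>
            le_trans (Finset.card_insert_le _ _) (by simp))
        _ = 2 * t.card := by rw [Finset.sum_const, smul_eq_mul, mul_comm]
    have hset : ((s.biUnion A : Finset (Fin n → K)) : Set (Fin n → K)) =
        {v : Fin n → K | ∃ i ∈ t, ∃ j, v = T j (e i)} := by
      ext v
      simp only [Finset.mem_coe, Finset.mem_biUnion, Set.mem_setOf_eq, hts, Finset.mem_image,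
        hA, Finset.mem_univ, true_and]
      constructor
      · rintro ⟨x, hx, j, rfl⟩
        exact ⟨Sum.elim id id x, ⟨x, hx, rfl⟩, j, rfl⟩
      · rintro ⟨i, ⟨x, hx, rfl⟩, j, rfl⟩
        exact ⟨x, hx, j, rfl⟩
    calc s.card ≤ 2 * t.card := hcard
      _ ≤ finrank K (span K {v : Fin n → K | ∃ i ∈ t, ∃ j, v = T j (e i)}) := hT t
      _ = _ := by rw [hset]
  obtain ⟨f, hf, hind⟩ := rado_aux (∑ x, (A x).card) A rfl hcond
  have hl : ∀ i : Fin m, ∃ j : Fin k, T j (e i) = f (Sum.inl i) := by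
    intro i
    have := hf (Sum.inl i)
    simp only [hA, Finset.mem_image, Finset.mem_univ, true_and, Sum.elim_inl, id] at this
    obtain ⟨j, hj⟩ := this
    exact ⟨j, hj⟩
  have hr : ∀ i : Fin m, ∃ j : Fin k, T j (e i) = f (Sum.inr i) := by
    intro i
    have := hf (Sum.inr i)
    simp only [hA, Finset.mem_image, Finset.mem_univ, true_and, Sum.elim_inr, id] at this
    obtain ⟨j, hj⟩ := this
    exact ⟨j, hj⟩
  choose φ hφ using hl
  choose ψ hψ using hr
  refine ⟨φ, ψ, ?_⟩
  have heq : Sum.elim (fun i => T (φ i) (e i)) (fun i : Fin m => T (ψ i) (e i)) = f := by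
    funext x
    cases x with
    | inl i => exact hφ i
    | inr i => exact hψ i
  rw [heq]
  exact hind
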